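/- Let (S_n) be a random walk with i.i.d. increments X_i satisfying E[|X_1|^b] < ∞ for some b > 1, and let m = E[X_1]. Then there exists a constant K > 0 such that for all n ≥ 1, all y ≥ n^{max(1/b,1/2)} and all x > 0: P(|S_n − m·n| ≥ x, max_{1≤i≤n} |X_i| ≤ y) ≤ K e^{−x/y}. -/

import Mathlib

open MeasureTheory ProbabilityTheory Filter Real

set_option maxHeartbeats 1000000
open MeasureTheory ProbabilityTheory Filter Real

lemma exp_le_aux {u c : ℝ} (hc : 0 ≤ c) (h : u ≤ c) : exp u ≤ 1 + u + u^2 * exp c := by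
  have h1 : 1 - u ≤ exp (-u) := by linarith [Real.add_one_le_exp (-u)]
  have h2 : exp u * exp (-u) = 1 := by rw [← Real.exp_add]; simp
  have h3 : (0:ℝ) < exp u := exp_pos u
  have hce : (1:ℝ) ≤ exp c := Real.one_le_exp hc
  rcases le_or_gt u 0 with hu | hu
  · have h4 : u + 1 ≤ exp u := Real.add_one_le_exp u
    nlinarith [sq_nonneg u, mul_nonneg (sq_nonneg u) (sub_nonneg.2 hce)]
  · have h5 : exp u ≤ exp c := exp_le_exp.2 h
    nlinarith [mul_nonneg (mul_nonneg hu.le hu.le) (sub_nonneg.2 h5),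
      mul_nonneg hu.le (sub_nonneg.2 (by nlinarith : exp u ≤ 1 + u * exp u))]

lemma core_bound (ν : Measure ℝ) [IsProbabilityMeasure ν]
    {b : ℝ} (hb : 1 < b) (hmom : Integrable (fun v => |v| ^ b) ν)
    {m : ℝ} (hm : m = ∫ v, v ∂ν)
    {n : ℕ} (hn : 1 ≤ n) {y : ℝ} (hy : (n:ℝ) ^ (max (1/b) (1/2)) ≤ y)
    {s : ℝ} (hs : |s| = 1/y) :
    ∫ v, exp (s * (if |v| ≤ y then v else 0)) ∂ν
      ≤ exp (s * m) * (1 + ((∫ v, (1+|v|)^b ∂ν) * (1 + 2*(1+|m|)^2 * exp (1+|m|))) / n) := by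
  have hb0 : (0:ℝ) < b := by linarith
  have hn0 : (0:ℝ) < n := by exact_mod_cast hn
  have hy1 : (1:ℝ) ≤ y := by
    refine le_trans ?_ hy
    rw [← Real.rpow_zero (n:ℝ)]
    exact Real.rpow_le_rpow_of_exponent_le (by exact_mod_cast hn) (by positivity)
  have hy0 : (0:ℝ) < y := by linarith
  have hexp1 : max (1/b) (1/2) * min b 2 = 1 := by
    rcases le_total b 2 with h | h
    · have h12 : (1:ℝ)/2 ≤ 1/b := by
        rw [div_le_div_iff₀ (by norm_num) hb0]; linarith
      rw [max_eq_left h12, min_eq_left h]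
      field_simp
    · have h12 : (1:ℝ)/b ≤ 1/2 := by
        rw [div_le_div_iff₀ hb0 (by norm_num)]; linarith
      rw [max_eq_right h12, min_eq_right h]
      norm_num
  have hminpos : (0:ℝ) < min b 2 := by positivity
  have hymin : (n:ℝ) ≤ y ^ (min b 2) := by
    have h1 : ((n:ℝ) ^ (max (1/b) (1/2))) ^ (min b 2) ≤ y ^ (min b 2) :=
      Real.rpow_le_rpow (Real.rpow_nonneg n.cast_nonneg _) hy hminpos.le
    rwa [← Real.rpow_mul n.cast_nonneg, hexp1, Real.rpow_one] at h1
  have hyb : (n:ℝ) ≤ y ^ b :=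
    hymin.trans (Real.rpow_le_rpow_of_exponent_le hy1 (min_le_left _ _))
  set c : ℝ := 1 + |m| with hc
  have hc1 : (1:ℝ) ≤ c := by rw [hc]; linarith [abs_nonneg m]
  have hc0 : (0:ℝ) < c := by linarith
  set M : ℝ := ∫ v, (1+|v|)^b ∂ν with hM
  have hM0 : 0 ≤ M := integral_nonneg fun v => by positivity
  set T : ℝ → ℝ := fun v => if |v| ≤ y then v else 0 with hT
  have hTm : Measurable T :=
    Measurable.ite (measurableSet_le measurable_abs measurable_const)
      measurable_id measurable_const
  have hT1 : ∀ v, |T v| ≤ |v| := by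
    intro v; rw [hT]; dsimp only; split <;> simp [abs_nonneg]
  have hT2 : ∀ v, |T v| ≤ y := by
    intro v; rw [hT]; dsimp only; split
    · assumption
    · simpa using hy0.le
  set u : ℝ → ℝ := fun v => s * (T v - m) with hu
  have hum : Measurable u := ((hTm.sub measurable_const).const_mul s)
  have hu_abs : ∀ v, |u v| ≤ c := by
    intro v
    rw [hu]; dsimp only
    rw [abs_mul, hs]
    have h1 : |T v - m| ≤ y + |m| := (abs_sub _ _).trans (by gcongr; exact hT2 v)
    calc 1/y * |T v - m| ≤ 1/y * (y + |m|) :=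
        mul_le_mul_of_nonneg_left h1 (by positivity)
      _ = 1 + |m|/y := by field_simp
      _ ≤ 1 + |m| := by
          have := div_le_self (abs_nonneg m) hy1
          linarith
  -- integrability facts
  have hMme : Measurable (fun v : ℝ => (1+|v|)^b) :=
    (measurable_const.add measurable_abs).pow measurable_const
  have int_M : Integrable (fun v : ℝ => (1+|v|)^b) ν := by
    refine Integrable.mono' (((integrable_const (1:ℝ)).add hmom).const_mul (2^b))
      hMme.aestronglyMeasurable (ae_of_all _ fun v => ?_)
    simp only [Pi.add_apply]
    rw [Real.norm_eq_abs, abs_of_nonneg (by positivity)]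
    rcases le_total (|v|) 1 with h | h
    · calc (1+|v|)^b ≤ (2:ℝ)^b := Real.rpow_le_rpow (by positivity) (by linarith) hb0.le
        _ ≤ 2^b * (1 + |v|^b) := by nlinarith [Real.rpow_pos_of_pos (show (0:ℝ)<2 by norm_num) b, Real.rpow_nonneg (abs_nonneg v) b]
    · calc (1+|v|)^b ≤ (2*|v|)^b := Real.rpow_le_rpow (by positivity) (by linarith) hb0.le
        _ = 2^b * |v|^b := Real.mul_rpow (by norm_num) (abs_nonneg v)
        _ ≤ 2^b * (1 + |v|^b) := by
            have := Real.rpow_pos_of_pos (show (0:ℝ)<2 by norm_num) b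
            nlinarith
  have int_id : Integrable (fun v : ℝ => v) ν := by
    refine Integrable.mono' ((integrable_const (1:ℝ)).add hmom)
      aestronglyMeasurable_id (ae_of_all _ fun v => ?_)
    simp only [Pi.add_apply]
    rw [Real.norm_eq_abs]
    rcases le_total (|v|) 1 with h | h
    · have := Real.rpow_nonneg (abs_nonneg v) b; linarith
    · have h2 : |v| ^ (1:ℝ) ≤ |v| ^ b := Real.rpow_le_rpow_of_exponent_le h hb.le
      rw [Real.rpow_one] at h2; linarith
  have int_T : Integrable T ν :=
    Integrable.mono' (integrable_const y) hTm.aestronglyMeasurable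
      (ae_of_all _ fun v => by rw [Real.norm_eq_abs]; exact hT2 v)
  have int_u : Integrable u ν := (int_T.sub (integrable_const m)).const_mul s
  have int_u2 : Integrable (fun v => (u v)^2) ν := by
    refine Integrable.mono' (integrable_const (c^2)) (hum.pow_const 2).aestronglyMeasurable
      (ae_of_all _ fun v => ?_)
    rw [Real.norm_eq_abs, abs_of_nonneg (sq_nonneg _)]
    have := hu_abs v
    nlinarith [abs_nonneg (u v), le_abs_self (u v), neg_abs_le (u v)]
  have int_lhs : Integrable (fun v => exp (s * T v)) ν := by
    refine Integrable.mono' (integrable_const (exp 1)) ((hTm.const_mul s).exp).aestronglyMeasurable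
      (ae_of_all _ fun v => ?_)
    rw [Real.norm_eq_abs, abs_of_nonneg (exp_pos _).le, Real.exp_le_exp]
    calc s * T v ≤ |s * T v| := le_abs_self _
      _ = 1/y * |T v| := by rw [abs_mul, hs]
      _ ≤ 1/y * y := mul_le_mul_of_nonneg_left (hT2 v) (by positivity)
      _ = 1 := by field_simp
  -- conversion npow/rpow
  have rpow_two : ∀ z : ℝ, z ^ (2:ℝ) = z^2 := fun z => by
    rw [show (2:ℝ) = ((2:ℕ):ℝ) by norm_num, Real.rpow_natCast]
  have hyb1pos : (0:ℝ) < y^(b-1) := Real.rpow_pos_of_pos hy0 _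
  have hpt1 : ∀ v, |T v - v| ≤ (1+|v|)^b / y^(b-1) := by
    intro v
    rw [hT]; dsimp only
    split
    · simp only [sub_self, abs_zero]; positivity
    · rename_i hv
      push_neg at hv
      rw [zero_sub, abs_neg, le_div_iff₀ hyb1pos]
      have hvpos : (0:ℝ) < 1+|v| := by positivity
      have h1 : y^(b-1) ≤ (1+|v|)^(b-1) :=
        Real.rpow_le_rpow hy0.le (by linarith [abs_nonneg v]) (by linarith)
      have heq := Real.rpow_add hvpos 1 (b-1)
      rw [show (1:ℝ)+(b-1) = b by ring, Real.rpow_one] at heq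
      calc |v| * y^(b-1) ≤ (1+|v|) * (1+|v|)^(b-1) :=
            mul_le_mul (by linarith [abs_nonneg v]) h1 (by positivity) (by positivity)
        _ = (1+|v|)^b := heq.symm
  have habs1 : |(∫ v, T v ∂ν) - m| ≤ M / y^(b-1) := by
    have he : (∫ v, T v ∂ν) - m = ∫ v, (T v - v) ∂ν := by
      rw [hm, ← integral_sub int_T int_id]
    rw [he]
    calc |∫ v, (T v - v) ∂ν| ≤ ∫ v, |T v - v| ∂ν := by
          simpa [Real.norm_eq_abs] using
            norm_integral_le_integral_norm (μ := ν) (f := fun v => T v - v)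
      _ ≤ ∫ v, (1+|v|)^b / y^(b-1) ∂ν :=
          integral_mono (int_T.sub int_id).abs (int_M.div_const _) hpt1
      _ = M / y^(b-1) := by rw [integral_div]
  have hEu : |∫ v, u v ∂ν| ≤ M / y^b := by
    have h1 : ∫ v, u v ∂ν = s * ((∫ v, T v ∂ν) - m) := by
      rw [hu]
      rw [integral_const_mul, integral_sub int_T (integrable_const m), integral_const]
      simp
    have heq := Real.rpow_add hy0 1 (b-1)
    rw [show (1:ℝ)+(b-1) = b by ring, Real.rpow_one] at heq
    rw [h1, abs_mul, hs]
    calc 1/y * |(∫ v, T v ∂ν) - m| ≤ 1/y * (M / y^(b-1)) :=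
        mul_le_mul_of_nonneg_left habs1 (by positivity)
      _ = M / (y * y^(b-1)) := by
          rw [div_mul_eq_mul_div, one_mul, div_div, mul_comm]
      _ = M / y^b := by rw [← heq]
  have hq0 : (0:ℝ) < y ^ (min b 2) := Real.rpow_pos_of_pos hy0 _
  have hy2 : (0:ℝ) < y^2 := by positivity
  have hpt2 : ∀ v, (u v)^2 ≤ (2*c^2) * (1+|v|)^b / y^(min b 2) := by
    intro v
    have hvpos : (0:ℝ) < 1+|v| := by positivity
    have hs2 : s^2 = 1/y^2 := by rw [← sq_abs, hs, div_pow]; norm_num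
    have hTc1 : |T v - m| ≤ c * (1+|v|) := by
      calc |T v - m| ≤ |T v| + |m| := abs_sub _ _
        _ ≤ |v| + |m| := by linarith [hT1 v]
        _ ≤ c * (1+|v|) := by rw [hc]; nlinarith [abs_nonneg v, abs_nonneg m]
    have hTcy : |T v - m| ≤ c * y := by
      calc |T v - m| ≤ |T v| + |m| := abs_sub _ _
        _ ≤ y + |m| := by linarith [hT2 v]
        _ ≤ c * y := by rw [hc]; nlinarith [abs_nonneg m]
    have hu2 : (u v)^2 = (T v - m)^2 / y^2 := by
      show (s * (T v - m))^2 = _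
      rw [mul_pow, hs2]; ring
    rw [le_div_iff₀ hq0]
    rcases le_total b 2 with hble | hble
    · rw [min_eq_left hble]
      have key : (T v - m)^2 ≤ c^2 * (1+|v|)^b * y^(2-b) := by
        rcases eq_or_ne (T v - m) 0 with h0 | h0
        · rw [h0]; simp only [ne_eq, OfNat.ofNat_ne_zero, not_false_eq_true, zero_pow]
          positivity
        · have hposx : (0:ℝ) < |T v - m| := abs_pos.2 h0
          have e1 : (T v - m)^2 = |T v - m|^b * |T v - m|^(2-b) := by
            rw [← Real.rpow_add hposx, show b + (2-b) = (2:ℝ) by ring, rpow_two, sq_abs]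
          have hcc := Real.rpow_add hc0 b (2-b)
          rw [show b + (2-b) = (2:ℝ) by ring, rpow_two] at hcc
          rw [e1]
          calc |T v - m|^b * |T v - m|^(2-b) ≤ (c*(1+|v|))^b * (c*y)^(2-b) :=
              mul_le_mul (Real.rpow_le_rpow (abs_nonneg _) hTc1 hb0.le)
                (Real.rpow_le_rpow (abs_nonneg _) hTcy (by linarith))
                (Real.rpow_nonneg (abs_nonneg _) _) (by positivity)
            _ = c^2 * (1+|v|)^b * y^(2-b) := by
                rw [Real.mul_rpow hc0.le hvpos.le, Real.mul_rpow hc0.le hy0.le]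
                rw [show c^b * (1+|v|)^b * (c^(2-b) * y^(2-b))
                    = (c^b * c^(2-b)) * (1+|v|)^b * y^(2-b) by ring, ← hcc]
      have hyy : y^(2-b) * y^b = y^2 := by
        rw [← Real.rpow_add hy0, show (2-b)+b = (2:ℝ) by ring, rpow_two]
      calc (u v)^2 * y^b = (T v - m)^2 * y^b / y^2 := by rw [hu2]; ring
        _ ≤ (c^2 * (1+|v|)^b * y^(2-b)) * y^b / y^2 := by
            apply (div_le_div_iff_of_pos_right hy2).mpr
            exact mul_le_mul_of_nonneg_right key (Real.rpow_nonneg hy0.le b)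
        _ = c^2 * (1+|v|)^b * (y^(2-b) * y^b) / y^2 := by ring
        _ = c^2 * (1+|v|)^b := by rw [hyy]; field_simp
        _ ≤ 2*c^2*(1+|v|)^b := by nlinarith [Real.rpow_nonneg hvpos.le b, sq_nonneg c]
    · rw [min_eq_right hble, rpow_two]
      have key2 : (T v - m)^2 ≤ c^2 * (1+|v|)^b := by
        have h2b : (1+|v|)^(2:ℝ) ≤ (1+|v|)^b :=
          Real.rpow_le_rpow_of_exponent_le (by linarith [abs_nonneg v]) hble
        rw [rpow_two] at h2b
        calc (T v - m)^2 = |T v - m|^2 := (sq_abs _).symm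
          _ ≤ (c*(1+|v|))^2 := by
              apply pow_le_pow_left₀ (abs_nonneg _) hTc1
          _ = c^2 * (1+|v|)^2 := by ring
          _ ≤ c^2 * (1+|v|)^b := by nlinarith [sq_nonneg c]
      calc (u v)^2 * y^2 = (T v - m)^2 := by rw [hu2]; field_simp
        _ ≤ c^2 * (1+|v|)^b := key2
        _ ≤ 2*c^2*(1+|v|)^b := by nlinarith [Real.rpow_nonneg hvpos.le b, sq_nonneg c]
  have hEu2 : ∫ v, (u v)^2 ∂ν ≤ 2*c^2*M/n := by
    have h1 : ∫ v, (u v)^2 ∂ν ≤ ∫ v, (2*c^2) * (1+|v|)^b / y^(min b 2) ∂ν :=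
      integral_mono int_u2 ((int_M.const_mul _).div_const _) hpt2
    rw [integral_div, integral_const_mul] at h1
    refine h1.trans ?_
    exact div_le_div_of_nonneg_left (by positivity) hn0 hymin
  have hpoint : ∀ v, exp (s * T v) ≤ exp (s*m) * (1 + u v + (u v)^2 * exp c) := by
    intro v
    have hsm : s * T v = s*m + u v := by show s * T v = s*m + s*(T v - m); ring
    rw [hsm, exp_add]
    exact mul_le_mul_of_nonneg_left
      (exp_le_aux (by linarith) ((le_abs_self _).trans (hu_abs v))) (exp_pos _).le
  have hfinal : ∫ v, exp (s * T v) ∂ν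
      ≤ exp (s*m) * (1 + (∫ v, u v ∂ν) + (∫ v, (u v)^2 ∂ν) * exp c) := by
    calc ∫ v, exp (s * T v) ∂ν
        ≤ ∫ v, exp (s*m) * (1 + u v + (u v)^2 * exp c) ∂ν :=
          integral_mono int_lhs
            ((((integrable_const 1).add int_u).add (int_u2.mul_const _)).const_mul _) hpoint
      _ = exp (s*m) * (1 + (∫ v, u v ∂ν) + (∫ v, (u v)^2 ∂ν) * exp c) := by
          have ia : Integrable (fun v => 1 + u v) ν := (integrable_const 1).add int_u
          have ib : Integrable (fun v => u v ^ 2 * exp c) ν := int_u2.mul_const _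
          rw [integral_const_mul, integral_add ia ib,
            integral_add (integrable_const 1) int_u, integral_const, integral_mul_const]
          simp
  refine hfinal.trans ?_
  have e1 : ∫ v, u v ∂ν ≤ M / n :=
    (le_abs_self _).trans (hEu.trans (div_le_div_of_nonneg_left hM0 hn0 hyb))
  have e2 : (∫ v, (u v)^2 ∂ν) * exp c ≤ (2*c^2*M/n) * exp c :=
    mul_le_mul_of_nonneg_right hEu2 (exp_pos _).le
  have hrw : (M * (1 + 2*c^2*exp c))/(n:ℝ) = M/n + (2*c^2*M/n)*exp c := by ring
  have h2 : 1 + (∫ v, u v ∂ν) + (∫ v, (u v)^2 ∂ν) * exp c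
      ≤ 1 + (M * (1 + 2*c^2*exp c))/n := by
    rw [hrw]; linarith
  exact mul_le_mul_of_nonneg_left h2 (exp_pos _).le

/-- Lemma 2.1(b) of Denisov–Dieker–Shneer: for a random walk with i.i.d.
increments having finite `b`-th absolute moment (`b > 1`) and mean `m`, there is `K > 0`
such that for all `n ≥ 1`, `y ≥ n^{max(1/b,1/2)}` and `x > 0`,
`P(|S_n − m n| ≥ x, max_{1≤i≤n} |X_i| ≤ y) ≤ K e^{−x/y}`. -/
theorem rw_deviation_bounded_increments
    {Ω : Type*} [MeasurableSpace Ω] (μ : Measure Ω) [IsProbabilityMeasure μ]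
    (X : ℕ → Ω → ℝ)
    (hmeas : ∀ i, Measurable (X i))
    (hindep : iIndepFun X μ)
    (hident : ∀ i, μ.map (X i) = μ.map (X 0))
    (b : ℝ) (hb : 1 < b)
    (hmom : Integrable (fun ω => |X 0 ω| ^ b) μ)
    (m : ℝ) (hm : m = μ[X 0]) :
    ∃ K > 0, ∀ n : ℕ, 1 ≤ n → ∀ y : ℝ, (n : ℝ) ^ (max (1 / b) (1 / 2)) ≤ y →
      ∀ x : ℝ, 0 < x →
      μ {ω | x ≤ |(∑ i ∈ Finset.range n, X i ω) - m * n| ∧ ∀ i < n, |X i ω| ≤ y}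
        ≤ ENNReal.ofReal (K * Real.exp (-x / y)) := by
  set ν : Measure ℝ := μ.map (X 0) with hν
  have hprob : IsProbabilityMeasure ν := Measure.isProbabilityMeasure_map (hmeas 0).aemeasurable
  have hmbm : Measurable (fun v : ℝ => |v| ^ b) := measurable_abs.pow measurable_const
  have hmomν : Integrable (fun v => |v| ^ b) ν := by
    rw [hν, integrable_map_measure hmbm.aestronglyMeasurable (hmeas 0).aemeasurable]
    exact hmom
  have hmν : m = ∫ v, v ∂ν := by
    have h := integral_map (φ := X 0) (μ := μ) (hmeas 0).aemeasurable
      (f := fun v : ℝ => v) measurable_id.aestronglyMeasurable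
    rw [hν, h]
    exact hm
  set c : ℝ := 1 + |m| with hc
  set M : ℝ := ∫ v, (1+|v|)^b ∂ν with hM
  set D : ℝ := M * (1 + 2*c^2*exp c) with hD
  have hM0 : 0 ≤ M := integral_nonneg fun v => by positivity
  have hD0 : 0 ≤ D := mul_nonneg hM0 (by positivity)
  refine ⟨2 * exp D, by positivity, ?_⟩
  intro n hn y hy x hx
  have hn0 : (0:ℝ) < n := by exact_mod_cast hn
  have hnne : (n:ℝ) ≠ 0 := hn0.ne'
  have hy1 : (1:ℝ) ≤ y := by
    refine le_trans ?_ hy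
    rw [← Real.rpow_zero (n:ℝ)]
    exact Real.rpow_le_rpow_of_exponent_le (by exact_mod_cast hn) (by positivity)
  have hy0 : (0:ℝ) < y := by linarith
  set t : ℝ := 1/y with ht
  have ht0 : 0 < t := by positivity
  set T : ℝ → ℝ := fun v => if |v| ≤ y then v else 0 with hT
  have hTm : Measurable T :=
    Measurable.ite (measurableSet_le measurable_abs measurable_const)
      measurable_id measurable_const
  have hT2 : ∀ v, |T v| ≤ y := by
    intro v; rw [hT]; dsimp only; split
    · assumption
    · simpa using hy0.le
  set X' : ℕ → Ω → ℝ := fun i ω => T (X i ω) with hX'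
  have hX'm : ∀ i, Measurable (X' i) := fun i => hTm.comp (hmeas i)
  have hindep' : iIndepFun X' μ :=
    hindep.comp (fun _ => T) (fun _ => hTm)
  have hmgf : ∀ (i : ℕ) (s : ℝ), |s| = 1/y →
      mgf (X' i) μ s ≤ exp (s * m) * (1 + D/n) := by
    intro i s hsabs
    have hme : Measurable fun v => exp (s * T v) := (hTm.const_mul s).exp
    have h1 : mgf (X' i) μ s = ∫ v, exp (s * T v) ∂ν := by
      rw [← hident i, integral_map (hmeas i).aemeasurable hme.aestronglyMeasurable]
      rfl
    rw [h1]
    exact core_bound ν hb hmomν hmν hn hy hsabs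
  have hint : ∀ s : ℝ, Integrable (fun ω => exp (s * (∑ i ∈ Finset.range n, X' i) ω)) μ := by
    intro s
    apply iIndepFun.integrable_exp_mul_sum hindep' hX'm
    intro i _
    refine Integrable.mono' (integrable_const (exp (|s| * y)))
      ((hX'm i).const_mul s).exp.aestronglyMeasurable (ae_of_all _ fun ω => ?_)
    rw [Real.norm_eq_abs, abs_of_nonneg (exp_pos _).le, exp_le_exp]
    calc s * X' i ω ≤ |s * X' i ω| := le_abs_self _
      _ = |s| * |T (X i ω)| := abs_mul _ _
      _ ≤ |s| * y := mul_le_mul_of_nonneg_left (hT2 _) (abs_nonneg s)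
  have hmgfZ : ∀ s : ℝ, |s| = 1/y →
      mgf (∑ i ∈ Finset.range n, X' i) μ s ≤ exp (s*m*n + D) := by
    intro s hsabs
    rw [iIndepFun.mgf_sum hindep' hX'm]
    have hDn : 0 ≤ D / n := div_nonneg hD0 hn0.le
    have h2 : ∏ i ∈ Finset.range n, mgf (X' i) μ s ≤ (exp (s*m) * (1 + D/(n:ℝ)))^n := by
      have h3 := Finset.prod_le_prod (s := Finset.range n)
        (fun i _ => mgf_nonneg (X := X' i)) (fun i _ => hmgf i s hsabs)
      simpa [Finset.prod_const, Finset.card_range] using h3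
    refine h2.trans ?_
    have e1 : 1 + D/n ≤ exp (D/n) := by linarith [Real.add_one_le_exp (D/n)]
    calc (exp (s*m) * (1 + D/n))^n ≤ (exp (s*m) * exp (D/n))^n := by
          apply pow_le_pow_left₀ (by positivity)
          exact mul_le_mul_of_nonneg_left e1 (exp_pos _).le
      _ = exp (s*m*n + D) := by
          rw [← exp_add, ← Real.exp_nat_mul]
          congr 1
          field_simp
          try ring
  have hup : (μ {ω | x + m*n ≤ (∑ i ∈ Finset.range n, X' i) ω}).toReal
      ≤ exp D * exp (-x/y) := by
    have habs : |t| = 1/y := by rw [abs_of_pos ht0]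
    refine (measure_ge_le_exp_mul_mgf (x + m*n) ht0.le (hint t)).trans ?_
    calc exp (-t*(x+m*n)) * mgf (∑ i ∈ Finset.range n, X' i) μ t
        ≤ exp (-t*(x+m*n)) * exp (t*m*n + D) :=
          mul_le_mul_of_nonneg_left (hmgfZ t habs) (exp_pos _).le
      _ = exp D * exp (-x/y) := by
          rw [← exp_add, ← exp_add, ht]
          congr 1
          field_simp
          try ring
  have hlo : (μ {ω | (∑ i ∈ Finset.range n, X' i) ω ≤ m*n - x}).toReal
      ≤ exp D * exp (-x/y) := by
    have habs : |(-t)| = 1/y := by rw [abs_neg, abs_of_pos ht0]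
    refine (measure_le_le_exp_mul_mgf (m*n - x) (neg_nonpos.2 ht0.le) (hint (-t))).trans ?_
    calc exp (-(-t)*(m*n-x)) * mgf (∑ i ∈ Finset.range n, X' i) μ (-t)
        ≤ exp (-(-t)*(m*n-x)) * exp ((-t)*m*n + D) :=
          mul_le_mul_of_nonneg_left (hmgfZ (-t) habs) (exp_pos _).le
      _ = exp D * exp (-x/y) := by
          rw [← exp_add, ← exp_add, ht]
          congr 1
          field_simp
          try ring
  have hsub : {ω | x ≤ |(∑ i ∈ Finset.range n, X i ω) - m * n| ∧ ∀ i < n, |X i ω| ≤ y}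
      ⊆ {ω | x + m*n ≤ (∑ i ∈ Finset.range n, X' i) ω}
        ∪ {ω | (∑ i ∈ Finset.range n, X' i) ω ≤ m*n - x} := by
    intro ω hω
    obtain ⟨h1, h2⟩ := hω
    have hZω : (∑ i ∈ Finset.range n, X' i) ω = ∑ i ∈ Finset.range n, X i ω := by
      rw [Finset.sum_apply]
      refine Finset.sum_congr rfl fun i hi => ?_
      show T (X i ω) = X i ω
      rw [hT]
      exact if_pos (h2 i (Finset.mem_range.mp hi))
    rcases le_abs.mp h1 with h | h
    · left
      show x + m*n ≤ (∑ i ∈ Finset.range n, X' i) ω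
      rw [hZω]; linarith
    · right
      show (∑ i ∈ Finset.range n, X' i) ω ≤ m*n - x
      rw [hZω]; linarith
  calc μ {ω | x ≤ |(∑ i ∈ Finset.range n, X i ω) - m * n| ∧ ∀ i < n, |X i ω| ≤ y}
      ≤ μ ({ω | x + m*n ≤ (∑ i ∈ Finset.range n, X' i) ω}
        ∪ {ω | (∑ i ∈ Finset.range n, X' i) ω ≤ m*n - x}) := measure_mono hsub
    _ ≤ μ {ω | x + m*n ≤ (∑ i ∈ Finset.range n, X' i) ω}
        + μ {ω | (∑ i ∈ Finset.range n, X' i) ω ≤ m*n - x} := measure_union_le _ _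
    _ ≤ ENNReal.ofReal (exp D * exp (-x/y)) + ENNReal.ofReal (exp D * exp (-x/y)) := by
        gcongr
        · rw [← ENNReal.ofReal_toReal (measure_ne_top μ _)]
          exact ENNReal.ofReal_le_ofReal hup
        · rw [← ENNReal.ofReal_toReal (measure_ne_top μ _)]
          exact ENNReal.ofReal_le_ofReal hlo
    _ ≤ ENNReal.ofReal (2 * exp D * Real.exp (-x/y)) := by
        rw [← ENNReal.ofReal_add (by positivity) (by positivity)]
        apply ENNReal.ofReal_le_ofReal
        ring_nf
        exact le_refl _
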